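/- Combining the lower and upper bounds: for every n ≥ 1, the minimal number of states of a deterministic finite automaton accepting L_n is exactly 2^n + 1. -/

import Mathlib

inductive Letter | a | b
deriving DecidableEq

instance instFintypeLetter : Fintype Letter :=
  ⟨{Letter.a, Letter.b}, fun x => by cases x <;> simp⟩

/-- The language `L_n`: strings with two `a`'s at distance exactly `n`. -/
def L (n : ℕ) : Language Letter :=
  {w | ∃ i, i + n < w.length ∧ w[i]? = some Letter.a ∧ w[i + n]? = some Letter.a}

namespace AuxStmt9

instance (n : ℕ) (w : List Letter) : Decidable (w ∈ L n) :=
  decidable_of_iff (∃ i < w.length, i + n < w.length ∧ w[i]? = some Letter.a ∧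
      w[i + n]? = some Letter.a)
    ⟨fun ⟨i, _, h1, h2, h3⟩ => ⟨i, h1, h2, h3⟩, fun ⟨i, h1, h2, h3⟩ => ⟨i, by omega, h1, h2, h3⟩⟩

/-- State vector: `stv n w k` records whether the letter `k+1` positions back is `a`. -/
def stv (n : ℕ) (w : List Letter) : Fin n → Bool :=
  fun k => decide (w.reverse[(k : ℕ)]? = some Letter.a)

/-- Shift a state vector by one letter. -/
def shift (n : ℕ) (v : Fin n → Bool) (c : Letter) : Fin n → Bool :=
  fun k => if h : (k : ℕ) = 0 then decide (c = Letter.a) else v ⟨(k : ℕ) - 1, by omega⟩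

/-- The DFA with `2^n + 1` states accepting `L n`. -/
def Mach (n : ℕ) (hn : 1 ≤ n) : DFA Letter (Option (Fin n → Bool)) where
  step := fun s c => match s with
    | none => none
    | some v => if c = Letter.a ∧ v ⟨n - 1, by omega⟩ = true then none else some (shift n v c)
  start := some fun _ => false
  accept := {none}

lemma L_append_mono {n : ℕ} {w : List Letter} (c : Letter) (h : w ∈ L n) : w ++ [c] ∈ L n := by
  obtain ⟨i, h1, h2, h3⟩ := h
  refine ⟨i, ?_, ?_, ?_⟩
  · simp only [List.length_append, List.length_cons, List.length_nil]; omega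
  · rwa [List.getElem?_append_left (by omega)]
  · rwa [List.getElem?_append_left h1]

lemma mem_L_append_iff {n : ℕ} (hn : 1 ≤ n) (w : List Letter) (c : Letter) :
    w ++ [c] ∈ L n ↔ w ∈ L n ∨ (c = Letter.a ∧ w.reverse[n - 1]? = some Letter.a) := by
  constructor
  · rintro ⟨i, h1, h2, h3⟩
    simp only [List.length_append, List.length_cons, List.length_nil] at h1
    rcases lt_or_ge (i + n) w.length with hlt | hge
    · left
      exact ⟨i, hlt, by rwa [List.getElem?_append_left (by omega)] at h2,
        by rwa [List.getElem?_append_left hlt] at h3⟩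
    · have hi : i + n = w.length := by omega
      have hnw : n ≤ w.length := by omega
      right
      have hc : (w ++ [c])[i + n]? = some c := by
        rw [hi, List.getElem?_append_right (le_refl _)]
        simp
      rw [hc] at h3
      have hwi : w[i]? = some Letter.a := by
        rwa [List.getElem?_append_left (by omega)] at h2
      constructor
      · exact Option.some.inj h3
      · have hrev : w.reverse[n - 1]? = w[w.length - 1 - (n - 1)]? :=
          List.getElem?_reverse (by omega)
        rw [hrev]
        have : w.length - 1 - (n - 1) = i := by omega
        rwa [this]
  · rintro (h | ⟨hc, ha⟩)
    · exact L_append_mono c h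
    · have hlen : n - 1 < w.length := by
        by_contra hcon
        rw [List.getElem?_eq_none (by rw [List.length_reverse]; omega)] at ha
        cases ha
      have hnw : n ≤ w.length := by omega
      refine ⟨w.length - n, ?_, ?_, ?_⟩
      · simp only [List.length_append, List.length_cons, List.length_nil]; omega
      · rw [List.getElem?_append_left (by omega)]
        have hrev : w.reverse[n - 1]? = w[w.length - 1 - (n - 1)]? :=
          List.getElem?_reverse (by omega)
        have : w.length - 1 - (n - 1) = w.length - n := by omega
        rw [hrev, this] at ha
        exact ha
      · have : w.length - n + n = w.length := by omega
        rw [this, List.getElem?_append_right (le_refl _)]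
        simp [hc]

lemma stv_append (n : ℕ) (w : List Letter) (c : Letter) :
    stv n (w ++ [c]) = shift n (stv n w) c := by
  funext k
  simp only [stv, shift, List.reverse_append, List.reverse_cons, List.reverse_nil,
    List.nil_append, List.singleton_append]
  rcases Nat.eq_zero_or_pos (k : ℕ) with h0 | hpos
  · rw [dif_pos h0, h0]
    simp
  · rw [dif_neg (by omega)]
    have : (c :: w.reverse)[(k : ℕ)]? = w.reverse[(k : ℕ) - 1]? := by
      rcases Nat.exists_eq_add_of_lt hpos with ⟨m, hm⟩
      have : (k : ℕ) = m + 1 := by omega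
      rw [this]
      simp
    rw [this]

lemma eval_eq (n : ℕ) (hn : 1 ≤ n) (w : List Letter) :
    (Mach n hn).eval w = if w ∈ L n then none else some (stv n w) := by
  induction w using List.reverseRecOn with
  | nil =>
    have hnot : ¬ ([] : List Letter) ∈ L n := by
      rintro ⟨i, h, -, -⟩
      exact absurd h (by simp)
    rw [if_neg hnot]
    have hs : stv n [] = fun _ => false := by funext k; simp [stv]
    rw [hs]
    rfl
  | append_singleton w c ih =>
    rw [DFA.eval_append_singleton, ih]
    by_cases hw : w ∈ L n
    · rw [if_pos hw, if_pos (L_append_mono c hw)]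
      rfl
    · rw [if_neg hw]
      show (if c = Letter.a ∧ stv n w ⟨n - 1, by omega⟩ = true then none
        else some (shift n (stv n w) c)) = _
      have hiff := mem_L_append_iff hn w c
      by_cases hcond : c = Letter.a ∧ w.reverse[n - 1]? = some Letter.a
      · rw [if_pos (by simp [stv, hcond.1, hcond.2]),
          if_pos (hiff.mpr (Or.inr hcond))]
      · rw [if_neg (by simp only [stv, decide_eq_true_eq]; tauto),
          if_neg (fun hmem => by rcases hiff.mp hmem with h | h
                                 exacts [hw h, hcond h]), stv_append]

lemma Mach_accepts (n : ℕ) (hn : 1 ≤ n) : (Mach n hn).accepts = L n := by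
  ext w
  rw [DFA.mem_accepts, eval_eq n hn]
  show (if w ∈ L n then none else some (stv n w)) ∈ ({none} : Set (Option (Fin n → Bool))) ↔ _
  split_ifs with h <;> simp [h]

/-- The word associated to a subset `S`: `a` exactly at positions in `S`. -/
def wS (n : ℕ) (S : Finset (Fin n)) : List Letter :=
  List.ofFn fun i : Fin n => if i ∈ S then Letter.a else Letter.b

/-- A fixed word in `L n`: `a`, then `n-1` `b`'s, then `a`. -/
def xw (n : ℕ) : List Letter :=
  List.ofFn fun i : Fin (n + 1) => if (i : ℕ) = 0 ∨ (i : ℕ) = n then Letter.a else Letter.b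

/-- The distinguishing suffix. -/
def zw (k : ℕ) : List Letter := List.replicate k Letter.b ++ [Letter.a]

lemma wS_not_mem (n : ℕ) (S : Finset (Fin n)) : wS n S ∉ L n := by
  rintro ⟨i, h, -, -⟩
  simp only [wS, List.length_ofFn] at h
  omega

lemma xw_mem (n : ℕ) (hn : 1 ≤ n) : xw n ∈ L n := by
  refine ⟨0, ?_, ?_, ?_⟩
  · simp [xw]
  · simp [xw, List.getElem?_ofFn, List.ofFnNthVal]
  · rw [xw, List.getElem?_ofFn]
    simp [List.ofFnNthVal]

lemma getElem?_wSz (n : ℕ) (S : Finset (Fin n)) (k j : ℕ) :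
    (wS n S ++ zw k)[j]? =
      if h : j < n then some (if (⟨j, h⟩ : Fin n) ∈ S then Letter.a else Letter.b)
      else if j < n + k then some Letter.b
      else if j = n + k then some Letter.a
      else none := by
  have hlen : (wS n S).length = n := by simp [wS]
  rcases lt_or_ge j n with hj | hj
  · rw [List.getElem?_append_left (by omega), dif_pos hj]
    rw [wS, List.getElem?_ofFn]
    simp [List.ofFnNthVal, hj]
  · rw [List.getElem?_append_right (by omega), dif_neg (by omega), hlen, zw]
    rcases lt_or_ge j (n + k) with hjk | hjk
    · rw [List.getElem?_append_left (by simp; omega), if_pos hjk]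
      simp only [List.getElem?_replicate]
      rw [if_pos (by omega)]
    · rw [if_neg (by omega), List.getElem?_append_right (by simp; omega)]
      rcases eq_or_lt_of_le hjk with heq | hlt
      · rw [if_pos heq.symm]
        simp only [List.length_replicate]
        have : j - n - k = 0 := by omega
        rw [this]
        rfl
      · rw [if_neg (by omega)]
        simp only [List.length_replicate]
        rw [List.getElem?_eq_none (by simp; omega)]

lemma wSz_mem_iff (n : ℕ) (S : Finset (Fin n)) (k : ℕ) (hk : k < n) :
    wS n S ++ zw k ∈ L n ↔ (⟨k, hk⟩ : Fin n) ∈ S := by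
  have hlen : (wS n S ++ zw k).length = n + k + 1 := by simp [wS, zw]; omega
  constructor
  · rintro ⟨i, h1, h2, h3⟩
    rw [hlen] at h1
    have hik : i ≤ k := by omega
    rw [getElem?_wSz] at h3
    rw [dif_neg (by omega)] at h3
    rcases lt_or_eq_of_le hik with hlt | heq
    · rw [if_pos (by omega)] at h3
      exact absurd (Option.some.inj h3) (by simp)
    · subst heq
      rw [getElem?_wSz, dif_pos hk] at h2
      by_contra hmem
      rw [if_neg hmem] at h2
      exact absurd (Option.some.inj h2) (by simp)
  · intro hmem
    refine ⟨k, by omega, ?_, ?_⟩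
    · rw [getElem?_wSz, dif_pos hk, if_pos hmem]
    · rw [getElem?_wSz, dif_neg (by omega), if_neg (by omega), if_pos (by omega)]

lemma eval_congr_append {σ : Type} (M : DFA Letter σ) {u v : List Letter}
    (h : M.eval u = M.eval v) (z : List Letter) :
    (u ++ z ∈ M.accepts ↔ v ++ z ∈ M.accepts) := by
  simp only [DFA.mem_accepts, DFA.eval, DFA.evalFrom_of_append]
  rw [show M.evalFrom M.start u = M.evalFrom M.start v from h]

end AuxStmt9

open AuxStmt9 in
/-- The minimal number of states of a DFA accepting `L_n` is exactly `2^n + 1`. -/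
theorem stmt9 (n : ℕ) (hn : 1 ≤ n) :
    IsLeast {k : ℕ | ∃ (σ : Type) (_ : Fintype σ) (M : DFA Letter σ),
      M.accepts = L n ∧ Fintype.card σ = k} (2 ^ n + 1) := by
  constructor
  · -- membership: the machine `Mach`
    refine ⟨Option (Fin n → Bool), inferInstance, Mach n hn, Mach_accepts n hn, ?_⟩
    simp [Fintype.card_option, Fintype.card_fun]
  · -- lower bound
    rintro k ⟨σ, hfin, M, hM, rfl⟩
    classical
    let g : Option (Finset (Fin n)) → σ := fun o =>
      match o with
      | none => M.eval (xw n)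
      | some S => M.eval (wS n S)
    have hg : Function.Injective g := by
      intro o1 o2 h
      match o1, o2 with
      | none, none => rfl
      | none, some S =>
          exfalso
          have hx : xw n ∈ M.accepts := hM ▸ xw_mem n hn
          have : wS n S ∈ M.accepts := by
            rw [DFA.mem_accepts] at hx ⊢
            have h' : M.eval (xw n) = M.eval (wS n S) := h
            rw [← h']
            exact hx
          exact wS_not_mem n S (hM ▸ this)
      | some S, none =>
          exfalso
          have hx : xw n ∈ M.accepts := hM ▸ xw_mem n hn
          have : wS n S ∈ M.accepts := by
            rw [DFA.mem_accepts] at hx ⊢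
            have h' : M.eval (wS n S) = M.eval (xw n) := h
            rw [h']
            exact hx
          exact wS_not_mem n S (hM ▸ this)
      | some S, some T =>
          congr 1
          by_contra hne
          obtain ⟨j, hj⟩ : ∃ j : Fin n, ¬ (j ∈ S ↔ j ∈ T) := by
            by_contra hall
            push_neg at hall
            exact hne (Finset.ext fun j => hall j)
          have hiff := eval_congr_append M (show M.eval (wS n S) = M.eval (wS n T) from h)
            (zw (j : ℕ))
          rw [hM] at hiff
          rw [wSz_mem_iff n S (j : ℕ) j.isLt, wSz_mem_iff n T (j : ℕ) j.isLt] at hiff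
          simp only [Fin.eta] at hiff
          exact hj hiff
    calc 2 ^ n + 1 = Fintype.card (Option (Finset (Fin n))) := by
          simp [Fintype.card_option, Fintype.card_finset]
      _ ≤ Fintype.card σ := Fintype.card_le_of_injective g hg
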